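/- The natural extension F̂ of the octagon Farey map is, up to null sets, a bijection of Σ × Σ₀ onto itself: there exist Lebesgue-null sets N₁, N₂ contained in R = (-∞, 1+√2) × (1+√2, ∞) such that F̂ restricted to R \ N₁ is a bijection onto R \ N₂. -/

import Mathlib

open MeasureTheory Set

noncomputable section

/-- The linear fractional transformation of `ℝ` induced by a 2×2 real matrix,
with the convention that the value is `0` when the denominator vanishes. -/
def mob (M : Matrix (Fin 2) (Fin 2) ℝ) (u : ℝ) : ℝ :=
  (M 0 0 * u + M 0 1) / (M 1 0 * u + M 1 1)

/-- The matrix `γ = [[-1, 2+2√2],[0,1]]`. -/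
def gam : Matrix (Fin 2) (Fin 2) ℝ := !![-1, 2 + 2 * Real.sqrt 2; 0, 1]

/-- The isometries `ν₁, …, ν₇` of the octagon. -/
def nu : ℕ → Matrix (Fin 2) (Fin 2) ℝ
  | 1 => (Real.sqrt 2)⁻¹ • !![1, 1; 1, -1]
  | 2 => (Real.sqrt 2)⁻¹ • !![1, 1; -1, 1]
  | 3 => !![0, 1; 1, 0]
  | 4 => !![0, 1; -1, 0]
  | 5 => (Real.sqrt 2)⁻¹ • !![-1, 1; 1, 1]
  | 6 => (Real.sqrt 2)⁻¹ • !![-1, 1; -1, -1]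
  | 7 => !![-1, 0; 0, 1]
  | _ => 1

/-- The index `i` of the sector `Σᵢ` (in inverse-slope coordinates) containing `u`:
`Σ₀ = (1+√2, ∞)`, `Σ₁ = (1, 1+√2]`, `Σ₂ = (√2-1, 1]`, `Σ₃ = (0, √2-1]`, `Σ₄ = (1-√2, 0]`,
`Σ₅ = (-1, 1-√2]`, `Σ₆ = (-1-√2, -1]`, `Σ₇ = (-∞, -1-√2]`. -/
def sectorIndex (u : ℝ) : ℕ :=
  if 1 + Real.sqrt 2 < u then 0
  else if 1 < u then 1
  else if Real.sqrt 2 - 1 < u then 2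
  else if 0 < u then 3
  else if 1 - Real.sqrt 2 < u then 4
  else if -1 < u then 5
  else if -(1 + Real.sqrt 2) < u then 6
  else 7

/-- The octagon Farey map in inverse-slope coordinates: `F(u) = (γ·νᵢ)[u]` for `u ∈ Σᵢ`
(`i = 1,…,7`), and `F(u) = u` for `u ∈ Σ₀`. -/
def F (u : ℝ) : ℝ :=
  if sectorIndex u = 0 then u else mob (gam * nu (sectorIndex u)) u

/-- The natural extension of the octagon Farey map:
`F̂(u,v) = ((γ·νᵢ)[u], (γ·νᵢ)[v])` for `u ∈ Σᵢ` (`i = 1,…,7`), and `F̂(u,v) = (u,v)`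
for `u ∈ Σ₀`. -/
def Fhat (p : ℝ × ℝ) : ℝ × ℝ :=
  if sectorIndex p.1 = 0 then p
  else (mob (gam * nu (sectorIndex p.1)) p.1, mob (gam * nu (sectorIndex p.1)) p.2)


local notation "s2" => Real.sqrt 2

def lft (a b c d x : ℝ) : ℝ := (a*x+b)/(c*x+d)

lemma lft_comp (a b c d x : ℝ) (h1 : c*x+d ≠ 0) (h2 : a*d - b*c ≠ 0) :
    lft d (-b) (-c) a (lft a b c d x) = x := by
  have hden : -c * ((a*x+b)/(c*x+d)) + a = (a*d - b*c)/(c*x+d) := by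
    field_simp; ring
  have hnum : d * ((a*x+b)/(c*x+d)) + -b = ((a*d - b*c)*x)/(c*x+d) := by
    rw [eq_div_iff h1, add_mul, mul_assoc, div_mul_cancel₀ _ h1]; ring
  unfold lft
  rw [hden, hnum, div_div_div_cancel_right₀ h1]
  exact mul_div_cancel_left₀ x h2

lemma lft_comp' (a b c d w : ℝ) (h1 : -c*w + a ≠ 0) (h2 : a*d - b*c ≠ 0) :
    lft a b c d (lft d (-b) (-c) a w) = w := by
  have h2' : d*a - (-b)*(-c) ≠ 0 := by
    intro h; apply h2; linarith [h]
  have := lft_comp d (-b) (-c) a w h1 h2'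
  simpa [neg_neg] using this

lemma mob_smul (a b c d x : ℝ) :
    mob ((Real.sqrt 2)⁻¹ • !![a,b;c,d]) x = lft a b c d x := by
  have hs : (Real.sqrt 2)⁻¹ ≠ 0 := by
    refine inv_ne_zero ?_
    positivity
  simp only [mob, lft, Matrix.smul_apply, smul_eq_mul,
    show (!![a,b;c,d] : Matrix (Fin 2) (Fin 2) ℝ) 0 0 = a from rfl,
    show (!![a,b;c,d] : Matrix (Fin 2) (Fin 2) ℝ) 0 1 = b from rfl,
    show (!![a,b;c,d] : Matrix (Fin 2) (Fin 2) ℝ) 1 0 = c from rfl,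
    show (!![a,b;c,d] : Matrix (Fin 2) (Fin 2) ℝ) 1 1 = d from rfl]
  rw [show (Real.sqrt 2)⁻¹*a*x + (Real.sqrt 2)⁻¹*b = (Real.sqrt 2)⁻¹*(a*x+b) by ring,
    show (Real.sqrt 2)⁻¹*c*x + (Real.sqrt 2)⁻¹*d = (Real.sqrt 2)⁻¹*(c*x+d) by ring,
    mul_div_mul_left _ _ hs]

lemma mob_mat (a b c d x : ℝ) : mob !![a,b;c,d] x = lft a b c d x := by
  simp [mob, lft]

lemma q2 : Real.sqrt 2 ^ 2 = 2 := Real.sq_sqrt (by norm_num)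
lemma q1 : 1 < Real.sqrt 2 := by nlinarith [Real.sqrt_nonneg 2, q2]
lemma q3 : Real.sqrt 2 < 3/2 := by nlinarith [Real.sqrt_nonneg 2, q2]

def E1 : Set ℝ := {1, Real.sqrt 2 - 1, 0, 1 - Real.sqrt 2, -1, -(1+Real.sqrt 2)}
def E2 : Set ℝ := {1+2*s2, 3+s2, 2+2*s2, 1+3*s2, 3+2*s2, 3+3*s2}

def SS : ℕ → Set ℝ
  | 1 => Set.Ioo 1 (1+s2)
  | 2 => Set.Ioo (s2-1) 1
  | 3 => Set.Ioo 0 (s2-1)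
  | 4 => Set.Ioo (1-s2) 0
  | 5 => Set.Ioo (-1) (1-s2)
  | 6 => Set.Ioo (-(1+s2)) (-1)
  | 7 => Set.Iio (-(1+s2))
  | _ => ∅

def VV : ℕ → Set ℝ
  | 1 => Set.Ioo (1+s2) (1+2*s2)
  | 2 => Set.Ioo (3+2*s2) (3+3*s2)
  | 3 => Set.Ioo (3+s2) (2+2*s2)
  | 4 => Set.Ioo (2+2*s2) (1+3*s2)
  | 5 => Set.Ioo (1+3*s2) (3+2*s2)
  | 6 => Set.Ioo (1+2*s2) (3+s2)
  | 7 => Set.Ioi (3+3*s2)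
  | _ => ∅

def ff : ℕ → ℝ → ℝ
  | 1 => lft (1+2*s2) (-(3+2*s2)) 1 (-1)
  | 2 => lft (-(3+2*s2)) (1+2*s2) (-1) 1
  | 3 => lft (2+2*s2) (-1) 1 0
  | 4 => lft (-(2+2*s2)) (-1) (-1) 0
  | 5 => lft (3+2*s2) (1+2*s2) 1 1
  | 6 => lft (-(1+2*s2)) (-(3+2*s2)) (-1) (-1)
  | 7 => lft 1 (2+2*s2) 0 1
  | _ => id

def gg : ℕ → ℝ → ℝ
  | 1 => lft (-1) (3+2*s2) (-1) (1+2*s2)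
  | 2 => lft 1 (-(1+2*s2)) 1 (-(3+2*s2))
  | 3 => lft 0 1 (-1) (2+2*s2)
  | 4 => lft 0 1 1 (-(2+2*s2))
  | 5 => lft 1 (-(1+2*s2)) (-1) (3+2*s2)
  | 6 => lft (-1) (3+2*s2) 1 (-(1+2*s2))
  | 7 => lft 1 (-(2+2*s2)) 0 1
  | _ => id

structure BranchOK (i : ℕ) : Prop where
  sec : ∀ u ∈ SS i, sectorIndex u = i
  mobf : ∀ x, mob (gam * nu i) x = ff i x
  Ssub : ∀ u ∈ SS i, u < 1 + s2 ∧ u ∉ E1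
  Vsub : ∀ z ∈ VV i, 1 + s2 < z ∧ z ∉ E2
  fS : ∀ u ∈ SS i, ff i u < 1 + s2
  fV : ∀ v : ℝ, 1 + s2 < v → ff i v ∈ VV i
  gf : ∀ x : ℝ, x ∈ SS i ∨ 1 + s2 < x → gg i (ff i x) = x
  gS : ∀ w : ℝ, w < 1 + s2 → gg i w ∈ SS i
  gV : ∀ z ∈ VV i, 1 + s2 < gg i z
  fg : ∀ w : ℝ, w < 1 + s2 ∨ w ∈ VV i → ff i (gg i w) = w

lemma branch1 : BranchOK 1 := by
  have hq2 := q2; have hq1 := q1; have hq3 := q3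
  have hsp : (0:ℝ) < s2 := by linarith
  have hgamnu : gam * nu 1 = (Real.sqrt 2)⁻¹ • !![1+2*s2, -(3+2*s2); 1, -1] := by
    rw [show nu 1 = (Real.sqrt 2)⁻¹ • !![1,1;1,-1] from rfl, Matrix.mul_smul, gam,
      Matrix.mul_fin_two]
    ext i j
    fin_cases i <;> fin_cases j <;> simp [Matrix.smul_apply] <;> ring
  constructor
  · -- sec
    intro u hu
    simp only [SS, Set.mem_Ioo] at hu
    unfold sectorIndex
    rw [if_neg (by linarith), if_pos (by linarith)]
  · -- mobf
    intro x
    rw [hgamnu, mob_smul]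
    rfl
  · -- Ssub
    intro u hu
    simp only [SS, Set.mem_Ioo] at hu
    refine ⟨by linarith, ?_⟩
    intro hm
    simp only [E1, Set.mem_insert_iff, Set.mem_singleton_iff] at hm
    rcases hm with h|h|h|h|h|h <;> linarith
  · -- Vsub
    intro z hz
    simp only [VV, Set.mem_Ioo] at hz
    refine ⟨by linarith, ?_⟩
    intro hm
    simp only [E2, Set.mem_insert_iff, Set.mem_singleton_iff] at hm
    rcases hm with h|h|h|h|h|h <;> linarith
  · -- fS
    intro u hu
    simp only [SS, Set.mem_Ioo] at hu
    simp only [ff, lft]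
    have hd : (0:ℝ) < 1 * u + -1 := by linarith
    rw [div_lt_iff₀ hd]
    nlinarith [mul_lt_mul_of_pos_left hu.1 hsp, mul_lt_mul_of_pos_left hu.2 hsp]
  · -- fV
    intro v hv
    simp only [ff, lft, VV, Set.mem_Ioo]
    have hd : (0:ℝ) < 1 * v + -1 := by linarith
    constructor
    · rw [lt_div_iff₀ hd]
      nlinarith [mul_lt_mul_of_pos_left hv hsp]
    · rw [div_lt_iff₀ hd]
      nlinarith [mul_lt_mul_of_pos_left hv hsp]
  · -- gf
    intro x hx
    have hd : 1*x + -1 ≠ 0 := by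
      rcases hx with h|h
      · simp only [SS, Set.mem_Ioo] at h
        exact ne_of_gt (by linarith)
      · exact ne_of_gt (by linarith)
    have h := lft_comp (1+2*s2) (-(3+2*s2)) 1 (-1) x hd
      (by rw [show (1+2*s2)*(-1) - (-(3+2*s2))*1 = (2:ℝ) by ring]; norm_num)
    simpa only [ff, gg, neg_neg, neg_zero] using h
  · -- gS
    intro w hw
    simp only [gg, lft, SS, Set.mem_Ioo]
    have hd : (0:ℝ) < -1 * w + (1+2*s2) := by linarith
    constructor
    · rw [lt_div_iff₀ hd]
      nlinarith [mul_lt_mul_of_pos_left hw hsp]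
    · rw [div_lt_iff₀ hd]
      nlinarith [mul_lt_mul_of_pos_left hw hsp]
  · -- gV
    intro z hz
    simp only [VV, Set.mem_Ioo] at hz
    simp only [gg, lft]
    have hd : (0:ℝ) < -1 * z + (1+2*s2) := by linarith
    rw [lt_div_iff₀ hd]
    nlinarith [mul_lt_mul_of_pos_left hz.1 hsp, mul_lt_mul_of_pos_left hz.2 hsp]
  · -- fg
    intro w hw
    have hd : -1*w + (1+2*s2) ≠ 0 := by
      rcases hw with h|h
      · exact ne_of_gt (by linarith)
      · simp only [VV, Set.mem_Ioo] at h
        exact ne_of_gt (by linarith)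
    have h := lft_comp' (1+2*s2) (-(3+2*s2)) 1 (-1) w hd
      (by rw [show (1+2*s2)*(-1) - (-(3+2*s2))*1 = (2:ℝ) by ring]; norm_num)
    simpa only [ff, gg, neg_neg, neg_zero] using h

lemma branch2 : BranchOK 2 := by
  have hq2 := q2; have hq1 := q1; have hq3 := q3
  have hsp : (0:ℝ) < s2 := by linarith
  have hgamnu : gam * nu 2 = (Real.sqrt 2)⁻¹ • !![-(3+2*s2), 1+2*s2; -1, 1] := by
    rw [show nu 2 = (Real.sqrt 2)⁻¹ • !![1, 1; -1, 1] from rfl, Matrix.mul_smul, gam,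
      Matrix.mul_fin_two]
    ext i j
    fin_cases i <;> fin_cases j <;> simp [Matrix.smul_apply] <;> ring
  constructor
  · -- sec
    intro u hu
    simp only [SS, Set.mem_Ioo] at hu
    unfold sectorIndex
    rw [if_neg (by linarith), if_neg (by linarith), if_pos (by linarith)]
  · -- mobf
    intro x
    rw [hgamnu, mob_smul]
    rfl
  · -- Ssub
    intro u hu
    simp only [SS, Set.mem_Ioo] at hu
    refine ⟨by linarith, ?_⟩
    intro hm
    simp only [E1, Set.mem_insert_iff, Set.mem_singleton_iff] at hm
    rcases hm with h|h|h|h|h|h <;> linarith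
  · -- Vsub
    intro z hz
    simp only [VV, Set.mem_Ioo] at hz
    refine ⟨by linarith, ?_⟩
    intro hm
    simp only [E2, Set.mem_insert_iff, Set.mem_singleton_iff] at hm
    rcases hm with h|h|h|h|h|h <;> linarith
  · -- fS
    intro u hu
    simp only [SS, Set.mem_Ioo] at hu
    simp only [ff, lft]
    have hd : (0:ℝ) < (-1)*u + (1) := by linarith
    rw [div_lt_iff₀ hd]
    nlinarith [mul_lt_mul_of_pos_left hu.1 hsp, mul_lt_mul_of_pos_left hu.2 hsp]
  · -- fV
    intro v hv
    simp only [ff, lft, VV, Set.mem_Ioo]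
    have hd : (-1)*v + (1) < (0:ℝ) := by linarith
    constructor
    · rw [lt_div_iff_of_neg hd]
      nlinarith [mul_lt_mul_of_pos_left hv hsp]
    · rw [div_lt_iff_of_neg hd]
      nlinarith [mul_lt_mul_of_pos_left hv hsp]
  · -- gf
    intro x hx
    have hd : (-1)*x + (1) ≠ 0 := by
      rcases hx with h|h
      · simp only [SS, Set.mem_Ioo] at h
        exact ne_of_gt (by linarith)
      · exact ne_of_lt (by linarith)
    have h := lft_comp (-(3+2*s2)) (1+2*s2) (-1) (1) x hd
      (by rw [show (-(3+2*s2))*(1) - (1+2*s2)*(-1) = (-2:ℝ) by ring]; norm_num)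
    simpa only [ff, gg, neg_neg, neg_zero] using h
  · -- gS
    intro w hw
    simp only [gg, lft, SS, Set.mem_Ioo]
    have hd : (1)*w + (-(3+2*s2)) < (0:ℝ) := by linarith
    constructor
    · rw [lt_div_iff_of_neg hd]
      nlinarith [mul_lt_mul_of_pos_left hw hsp]
    · rw [div_lt_iff_of_neg hd]
      nlinarith [mul_lt_mul_of_pos_left hw hsp]
  · -- gV
    intro z hz
    simp only [VV, Set.mem_Ioo] at hz
    simp only [gg, lft]
    have hd : (0:ℝ) < (1)*z + (-(3+2*s2)) := by linarith
    rw [lt_div_iff₀ hd]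
    nlinarith [mul_lt_mul_of_pos_left hz.1 hsp, mul_lt_mul_of_pos_left hz.2 hsp]
  · -- fg
    intro w hw
    have hd : -(-1)*w + (-(3+2*s2)) ≠ 0 := by
      rcases hw with h|h
      · exact ne_of_lt (by linarith)
      · simp only [VV, Set.mem_Ioo] at h
        exact ne_of_gt (by linarith)
    have h := lft_comp' (-(3+2*s2)) (1+2*s2) (-1) (1) w hd
      (by rw [show (-(3+2*s2))*(1) - (1+2*s2)*(-1) = (-2:ℝ) by ring]; norm_num)
    simpa only [ff, gg, neg_neg, neg_zero] using h

lemma branch3 : BranchOK 3 := by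
  have hq2 := q2; have hq1 := q1; have hq3 := q3
  have hsp : (0:ℝ) < s2 := by linarith
  have hgamnu : gam * nu 3 = !![2+2*s2, -1; 1, 0] := by
    rw [show nu 3 = !![0, 1; 1, 0] from rfl, gam, Matrix.mul_fin_two]
    ext i j
    fin_cases i <;> fin_cases j <;> simp <;> ring
  constructor
  · -- sec
    intro u hu
    simp only [SS, Set.mem_Ioo] at hu
    unfold sectorIndex
    rw [if_neg (by linarith), if_neg (by linarith), if_neg (by linarith), if_pos (by linarith)]
  · -- mobf
    intro x
    rw [hgamnu, mob_mat]
    rfl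
  · -- Ssub
    intro u hu
    simp only [SS, Set.mem_Ioo] at hu
    refine ⟨by linarith, ?_⟩
    intro hm
    simp only [E1, Set.mem_insert_iff, Set.mem_singleton_iff] at hm
    rcases hm with h|h|h|h|h|h <;> linarith
  · -- Vsub
    intro z hz
    simp only [VV, Set.mem_Ioo] at hz
    refine ⟨by linarith, ?_⟩
    intro hm
    simp only [E2, Set.mem_insert_iff, Set.mem_singleton_iff] at hm
    rcases hm with h|h|h|h|h|h <;> linarith
  · -- fS
    intro u hu
    simp only [SS, Set.mem_Ioo] at hu
    simp only [ff, lft]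
    have hd : (0:ℝ) < (1)*u + (0) := by linarith
    rw [div_lt_iff₀ hd]
    nlinarith [mul_lt_mul_of_pos_left hu.1 hsp, mul_lt_mul_of_pos_left hu.2 hsp]
  · -- fV
    intro v hv
    simp only [ff, lft, VV, Set.mem_Ioo]
    have hd : (0:ℝ) < (1)*v + (0) := by linarith
    constructor
    · rw [lt_div_iff₀ hd]
      nlinarith [mul_lt_mul_of_pos_left hv hsp]
    · rw [div_lt_iff₀ hd]
      nlinarith [mul_lt_mul_of_pos_left hv hsp]
  · -- gf
    intro x hx
    have hd : (1)*x + (0) ≠ 0 := by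
      rcases hx with h|h
      · simp only [SS, Set.mem_Ioo] at h
        exact ne_of_gt (by linarith)
      · exact ne_of_gt (by linarith)
    have h := lft_comp (2+2*s2) (-1) (1) (0) x hd
      (by rw [show (2+2*s2)*(0) - (-1)*(1) = (1:ℝ) by ring]; norm_num)
    simpa only [ff, gg, neg_neg, neg_zero] using h
  · -- gS
    intro w hw
    simp only [gg, lft, SS, Set.mem_Ioo]
    have hd : (0:ℝ) < (-1)*w + (2+2*s2) := by linarith
    constructor
    · rw [lt_div_iff₀ hd]
      nlinarith [mul_lt_mul_of_pos_left hw hsp]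
    · rw [div_lt_iff₀ hd]
      nlinarith [mul_lt_mul_of_pos_left hw hsp]
  · -- gV
    intro z hz
    simp only [VV, Set.mem_Ioo] at hz
    simp only [gg, lft]
    have hd : (0:ℝ) < (-1)*z + (2+2*s2) := by linarith
    rw [lt_div_iff₀ hd]
    nlinarith [mul_lt_mul_of_pos_left hz.1 hsp, mul_lt_mul_of_pos_left hz.2 hsp]
  · -- fg
    intro w hw
    have hd : -(1)*w + (2+2*s2) ≠ 0 := by
      rcases hw with h|h
      · exact ne_of_gt (by linarith)
      · simp only [VV, Set.mem_Ioo] at h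
        exact ne_of_gt (by linarith)
    have h := lft_comp' (2+2*s2) (-1) (1) (0) w hd
      (by rw [show (2+2*s2)*(0) - (-1)*(1) = (1:ℝ) by ring]; norm_num)
    simpa only [ff, gg, neg_neg, neg_zero] using h

lemma branch4 : BranchOK 4 := by
  have hq2 := q2; have hq1 := q1; have hq3 := q3
  have hsp : (0:ℝ) < s2 := by linarith
  have hgamnu : gam * nu 4 = !![-(2+2*s2), -1; -1, 0] := by
    rw [show nu 4 = !![0, 1; -1, 0] from rfl, gam, Matrix.mul_fin_two]
    ext i j
    fin_cases i <;> fin_cases j <;> simp <;> ring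
  constructor
  · -- sec
    intro u hu
    simp only [SS, Set.mem_Ioo] at hu
    unfold sectorIndex
    rw [if_neg (by linarith), if_neg (by linarith), if_neg (by linarith), if_neg (by linarith), if_pos (by linarith)]
  · -- mobf
    intro x
    rw [hgamnu, mob_mat]
    rfl
  · -- Ssub
    intro u hu
    simp only [SS, Set.mem_Ioo] at hu
    refine ⟨by linarith, ?_⟩
    intro hm
    simp only [E1, Set.mem_insert_iff, Set.mem_singleton_iff] at hm
    rcases hm with h|h|h|h|h|h <;> linarith
  · -- Vsub
    intro z hz
    simp only [VV, Set.mem_Ioo] at hz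
    refine ⟨by linarith, ?_⟩
    intro hm
    simp only [E2, Set.mem_insert_iff, Set.mem_singleton_iff] at hm
    rcases hm with h|h|h|h|h|h <;> linarith
  · -- fS
    intro u hu
    simp only [SS, Set.mem_Ioo] at hu
    simp only [ff, lft]
    have hd : (0:ℝ) < (-1)*u + (0) := by linarith
    rw [div_lt_iff₀ hd]
    nlinarith [mul_lt_mul_of_pos_left hu.1 hsp, mul_lt_mul_of_pos_left hu.2 hsp]
  · -- fV
    intro v hv
    simp only [ff, lft, VV, Set.mem_Ioo]
    have hd : (-1)*v + (0) < (0:ℝ) := by linarith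
    constructor
    · rw [lt_div_iff_of_neg hd]
      nlinarith [mul_lt_mul_of_pos_left hv hsp]
    · rw [div_lt_iff_of_neg hd]
      nlinarith [mul_lt_mul_of_pos_left hv hsp]
  · -- gf
    intro x hx
    have hd : (-1)*x + (0) ≠ 0 := by
      rcases hx with h|h
      · simp only [SS, Set.mem_Ioo] at h
        exact ne_of_gt (by linarith)
      · exact ne_of_lt (by linarith)
    have h := lft_comp (-(2+2*s2)) (-1) (-1) (0) x hd
      (by rw [show (-(2+2*s2))*(0) - (-1)*(-1) = (-1:ℝ) by ring]; norm_num)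
    simpa only [ff, gg, neg_neg, neg_zero] using h
  · -- gS
    intro w hw
    simp only [gg, lft, SS, Set.mem_Ioo]
    have hd : (1)*w + (-(2+2*s2)) < (0:ℝ) := by linarith
    constructor
    · rw [lt_div_iff_of_neg hd]
      nlinarith [mul_lt_mul_of_pos_left hw hsp]
    · rw [div_lt_iff_of_neg hd]
      nlinarith [mul_lt_mul_of_pos_left hw hsp]
  · -- gV
    intro z hz
    simp only [VV, Set.mem_Ioo] at hz
    simp only [gg, lft]
    have hd : (0:ℝ) < (1)*z + (-(2+2*s2)) := by linarith
    rw [lt_div_iff₀ hd]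
    nlinarith [mul_lt_mul_of_pos_left hz.1 hsp, mul_lt_mul_of_pos_left hz.2 hsp]
  · -- fg
    intro w hw
    have hd : -(-1)*w + (-(2+2*s2)) ≠ 0 := by
      rcases hw with h|h
      · exact ne_of_lt (by linarith)
      · simp only [VV, Set.mem_Ioo] at h
        exact ne_of_gt (by linarith)
    have h := lft_comp' (-(2+2*s2)) (-1) (-1) (0) w hd
      (by rw [show (-(2+2*s2))*(0) - (-1)*(-1) = (-1:ℝ) by ring]; norm_num)
    simpa only [ff, gg, neg_neg, neg_zero] using h

lemma branch5 : BranchOK 5 := by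
  have hq2 := q2; have hq1 := q1; have hq3 := q3
  have hsp : (0:ℝ) < s2 := by linarith
  have hgamnu : gam * nu 5 = (Real.sqrt 2)⁻¹ • !![3+2*s2, 1+2*s2; 1, 1] := by
    rw [show nu 5 = (Real.sqrt 2)⁻¹ • !![-1, 1; 1, 1] from rfl, Matrix.mul_smul, gam,
      Matrix.mul_fin_two]
    ext i j
    fin_cases i <;> fin_cases j <;> simp [Matrix.smul_apply] <;> ring
  constructor
  · -- sec
    intro u hu
    simp only [SS, Set.mem_Ioo] at hu
    unfold sectorIndex
    rw [if_neg (by linarith), if_neg (by linarith), if_neg (by linarith), if_neg (by linarith), if_neg (by linarith), if_pos (by linarith)]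
  · -- mobf
    intro x
    rw [hgamnu, mob_smul]
    rfl
  · -- Ssub
    intro u hu
    simp only [SS, Set.mem_Ioo] at hu
    refine ⟨by linarith, ?_⟩
    intro hm
    simp only [E1, Set.mem_insert_iff, Set.mem_singleton_iff] at hm
    rcases hm with h|h|h|h|h|h <;> linarith
  · -- Vsub
    intro z hz
    simp only [VV, Set.mem_Ioo] at hz
    refine ⟨by linarith, ?_⟩
    intro hm
    simp only [E2, Set.mem_insert_iff, Set.mem_singleton_iff] at hm
    rcases hm with h|h|h|h|h|h <;> linarith
  · -- fS
    intro u hu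
    simp only [SS, Set.mem_Ioo] at hu
    simp only [ff, lft]
    have hd : (0:ℝ) < (1)*u + (1) := by linarith
    rw [div_lt_iff₀ hd]
    nlinarith [mul_lt_mul_of_pos_left hu.1 hsp, mul_lt_mul_of_pos_left hu.2 hsp]
  · -- fV
    intro v hv
    simp only [ff, lft, VV, Set.mem_Ioo]
    have hd : (0:ℝ) < (1)*v + (1) := by linarith
    constructor
    · rw [lt_div_iff₀ hd]
      nlinarith [mul_lt_mul_of_pos_left hv hsp]
    · rw [div_lt_iff₀ hd]
      nlinarith [mul_lt_mul_of_pos_left hv hsp]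
  · -- gf
    intro x hx
    have hd : (1)*x + (1) ≠ 0 := by
      rcases hx with h|h
      · simp only [SS, Set.mem_Ioo] at h
        exact ne_of_gt (by linarith)
      · exact ne_of_gt (by linarith)
    have h := lft_comp (3+2*s2) (1+2*s2) (1) (1) x hd
      (by rw [show (3+2*s2)*(1) - (1+2*s2)*(1) = (2:ℝ) by ring]; norm_num)
    simpa only [ff, gg, neg_neg, neg_zero] using h
  · -- gS
    intro w hw
    simp only [gg, lft, SS, Set.mem_Ioo]
    have hd : (0:ℝ) < (-1)*w + (3+2*s2) := by linarith
    constructor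
    · rw [lt_div_iff₀ hd]
      nlinarith [mul_lt_mul_of_pos_left hw hsp]
    · rw [div_lt_iff₀ hd]
      nlinarith [mul_lt_mul_of_pos_left hw hsp]
  · -- gV
    intro z hz
    simp only [VV, Set.mem_Ioo] at hz
    simp only [gg, lft]
    have hd : (0:ℝ) < (-1)*z + (3+2*s2) := by linarith
    rw [lt_div_iff₀ hd]
    nlinarith [mul_lt_mul_of_pos_left hz.1 hsp, mul_lt_mul_of_pos_left hz.2 hsp]
  · -- fg
    intro w hw
    have hd : -(1)*w + (3+2*s2) ≠ 0 := by
      rcases hw with h|h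
      · exact ne_of_gt (by linarith)
      · simp only [VV, Set.mem_Ioo] at h
        exact ne_of_gt (by linarith)
    have h := lft_comp' (3+2*s2) (1+2*s2) (1) (1) w hd
      (by rw [show (3+2*s2)*(1) - (1+2*s2)*(1) = (2:ℝ) by ring]; norm_num)
    simpa only [ff, gg, neg_neg, neg_zero] using h

lemma branch6 : BranchOK 6 := by
  have hq2 := q2; have hq1 := q1; have hq3 := q3
  have hsp : (0:ℝ) < s2 := by linarith
  have hgamnu : gam * nu 6 = (Real.sqrt 2)⁻¹ • !![-(1+2*s2), -(3+2*s2); -1, -1] := by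
    rw [show nu 6 = (Real.sqrt 2)⁻¹ • !![-1, 1; -1, -1] from rfl, Matrix.mul_smul, gam,
      Matrix.mul_fin_two]
    ext i j
    fin_cases i <;> fin_cases j <;> simp [Matrix.smul_apply] <;> ring
  constructor
  · -- sec
    intro u hu
    simp only [SS, Set.mem_Ioo] at hu
    unfold sectorIndex
    rw [if_neg (by linarith), if_neg (by linarith), if_neg (by linarith), if_neg (by linarith), if_neg (by linarith), if_neg (by linarith), if_pos (by linarith)]
  · -- mobf
    intro x
    rw [hgamnu, mob_smul]
    rfl
  · -- Ssub
    intro u hu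
    simp only [SS, Set.mem_Ioo] at hu
    refine ⟨by linarith, ?_⟩
    intro hm
    simp only [E1, Set.mem_insert_iff, Set.mem_singleton_iff] at hm
    rcases hm with h|h|h|h|h|h <;> linarith
  · -- Vsub
    intro z hz
    simp only [VV, Set.mem_Ioo] at hz
    refine ⟨by linarith, ?_⟩
    intro hm
    simp only [E2, Set.mem_insert_iff, Set.mem_singleton_iff] at hm
    rcases hm with h|h|h|h|h|h <;> linarith
  · -- fS
    intro u hu
    simp only [SS, Set.mem_Ioo] at hu
    simp only [ff, lft]
    have hd : (0:ℝ) < (-1)*u + (-1) := by linarith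
    rw [div_lt_iff₀ hd]
    nlinarith [mul_lt_mul_of_pos_left hu.1 hsp, mul_lt_mul_of_pos_left hu.2 hsp]
  · -- fV
    intro v hv
    simp only [ff, lft, VV, Set.mem_Ioo]
    have hd : (-1)*v + (-1) < (0:ℝ) := by linarith
    constructor
    · rw [lt_div_iff_of_neg hd]
      nlinarith [mul_lt_mul_of_pos_left hv hsp]
    · rw [div_lt_iff_of_neg hd]
      nlinarith [mul_lt_mul_of_pos_left hv hsp]
  · -- gf
    intro x hx
    have hd : (-1)*x + (-1) ≠ 0 := by
      rcases hx with h|h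
      · simp only [SS, Set.mem_Ioo] at h
        exact ne_of_gt (by linarith)
      · exact ne_of_lt (by linarith)
    have h := lft_comp (-(1+2*s2)) (-(3+2*s2)) (-1) (-1) x hd
      (by rw [show (-(1+2*s2))*(-1) - (-(3+2*s2))*(-1) = (-2:ℝ) by ring]; norm_num)
    simpa only [ff, gg, neg_neg, neg_zero] using h
  · -- gS
    intro w hw
    simp only [gg, lft, SS, Set.mem_Ioo]
    have hd : (1)*w + (-(1+2*s2)) < (0:ℝ) := by linarith
    constructor
    · rw [lt_div_iff_of_neg hd]
      nlinarith [mul_lt_mul_of_pos_left hw hsp]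
    · rw [div_lt_iff_of_neg hd]
      nlinarith [mul_lt_mul_of_pos_left hw hsp]
  · -- gV
    intro z hz
    simp only [VV, Set.mem_Ioo] at hz
    simp only [gg, lft]
    have hd : (0:ℝ) < (1)*z + (-(1+2*s2)) := by linarith
    rw [lt_div_iff₀ hd]
    nlinarith [mul_lt_mul_of_pos_left hz.1 hsp, mul_lt_mul_of_pos_left hz.2 hsp]
  · -- fg
    intro w hw
    have hd : -(-1)*w + (-(1+2*s2)) ≠ 0 := by
      rcases hw with h|h
      · exact ne_of_lt (by linarith)
      · simp only [VV, Set.mem_Ioo] at h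
        exact ne_of_gt (by linarith)
    have h := lft_comp' (-(1+2*s2)) (-(3+2*s2)) (-1) (-1) w hd
      (by rw [show (-(1+2*s2))*(-1) - (-(3+2*s2))*(-1) = (-2:ℝ) by ring]; norm_num)
    simpa only [ff, gg, neg_neg, neg_zero] using h

lemma branch7 : BranchOK 7 := by
  have hq2 := q2; have hq1 := q1; have hq3 := q3
  have hsp : (0:ℝ) < s2 := by linarith
  have hgamnu : gam * nu 7 = !![1, 2+2*s2; 0, 1] := by
    rw [show nu 7 = !![-1, 0; 0, 1] from rfl, gam, Matrix.mul_fin_two]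
    ext i j
    fin_cases i <;> fin_cases j <;> simp <;> ring
  constructor
  · -- sec
    intro u hu
    simp only [SS, Set.mem_Iio] at hu
    unfold sectorIndex
    rw [if_neg (by linarith), if_neg (by linarith), if_neg (by linarith), if_neg (by linarith), if_neg (by linarith), if_neg (by linarith), if_neg (by linarith)]
  · -- mobf
    intro x
    rw [hgamnu, mob_mat]
    rfl
  · -- Ssub
    intro u hu
    simp only [SS, Set.mem_Iio] at hu
    refine ⟨by linarith, ?_⟩
    intro hm
    simp only [E1, Set.mem_insert_iff, Set.mem_singleton_iff] at hm
    rcases hm with h|h|h|h|h|h <;> linarith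
  · -- Vsub
    intro z hz
    simp only [VV, Set.mem_Ioi] at hz
    refine ⟨by linarith, ?_⟩
    intro hm
    simp only [E2, Set.mem_insert_iff, Set.mem_singleton_iff] at hm
    rcases hm with h|h|h|h|h|h <;> linarith
  · -- fS
    intro u hu
    simp only [SS, Set.mem_Iio] at hu
    simp only [ff, lft]
    have hd : (0:ℝ) < (0)*u + (1) := by linarith
    rw [div_lt_iff₀ hd]
    nlinarith [mul_lt_mul_of_pos_left hu hsp]
  · -- fV
    intro v hv
    simp only [ff, lft, VV, Set.mem_Ioi]
    have hd : (0:ℝ) < (0)*v + (1) := by linarith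
    rw [lt_div_iff₀ hd]
    nlinarith [mul_lt_mul_of_pos_left hv hsp]
  · -- gf
    intro x hx
    have hd : (0)*x + (1) ≠ 0 := by
      rcases hx with h|h
      · simp only [SS, Set.mem_Iio] at h
        exact ne_of_gt (by linarith)
      · exact ne_of_gt (by linarith)
    have h := lft_comp (1) (2+2*s2) (0) (1) x hd
      (by rw [show (1)*(1) - (2+2*s2)*(0) = (1:ℝ) by ring]; norm_num)
    simpa only [ff, gg, neg_neg, neg_zero] using h
  · -- gS
    intro w hw
    simp only [gg, lft, SS, Set.mem_Iio]
    have hd : (0:ℝ) < (0)*w + (1) := by linarith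
    rw [div_lt_iff₀ hd]
    nlinarith [mul_lt_mul_of_pos_left hw hsp]
  · -- gV
    intro z hz
    simp only [VV, Set.mem_Ioi] at hz
    simp only [gg, lft]
    have hd : (0:ℝ) < (0)*z + (1) := by linarith
    rw [lt_div_iff₀ hd]
    nlinarith [mul_lt_mul_of_pos_left hz hsp]
  · -- fg
    intro w hw
    have hd : -(0)*w + (1) ≠ 0 := by
      rcases hw with h|h
      · exact ne_of_gt (by linarith)
      · simp only [VV, Set.mem_Ioi] at h
        exact ne_of_gt (by linarith)
    have h := lft_comp' (1) (2+2*s2) (0) (1) w hd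
      (by rw [show (1)*(1) - (2+2*s2)*(0) = (1:ℝ) by ring]; norm_num)
    simpa only [ff, gg, neg_neg, neg_zero] using h

lemma branch_ok (i : ℕ) (h1 : 1 ≤ i) (h7 : i ≤ 7) : BranchOK i := by
  interval_cases i
  exacts [branch1, branch2, branch3, branch4, branch5, branch6, branch7]

lemma mem_branch {u : ℝ} (hu : u < 1 + s2) (hE : u ∉ E1) :
    ∃ i, 1 ≤ i ∧ i ≤ 7 ∧ u ∈ SS i := by
  have hq1 := q1; have hq3 := q3
  simp only [E1, Set.mem_insert_iff, Set.mem_singleton_iff, not_or] at hE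
  obtain ⟨e1, e2, e3, e4, e5, e6⟩ := hE
  rcases lt_or_ge 1 u with h|h
  · exact ⟨1, le_refl _, by norm_num, by simp only [SS, Set.mem_Ioo]; exact ⟨h, hu⟩⟩
  rcases lt_or_ge (s2 - 1) u with h2|h2
  · exact ⟨2, by norm_num, by norm_num,
      by simp only [SS, Set.mem_Ioo]; exact ⟨h2, lt_of_le_of_ne h e1⟩⟩
  rcases lt_or_ge 0 u with h3|h3
  · exact ⟨3, by norm_num, by norm_num,
      by simp only [SS, Set.mem_Ioo]; exact ⟨h3, lt_of_le_of_ne h2 e2⟩⟩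
  rcases lt_or_ge (1 - s2) u with h4|h4
  · exact ⟨4, by norm_num, by norm_num,
      by simp only [SS, Set.mem_Ioo]; exact ⟨h4, lt_of_le_of_ne h3 e3⟩⟩
  rcases lt_or_ge (-1) u with h5|h5
  · exact ⟨5, by norm_num, by norm_num,
      by simp only [SS, Set.mem_Ioo]; exact ⟨h5, lt_of_le_of_ne h4 e4⟩⟩
  rcases lt_or_ge (-(1 + s2)) u with h6|h6
  · exact ⟨6, by norm_num, by norm_num,
      by simp only [SS, Set.mem_Ioo]; exact ⟨h6, lt_of_le_of_ne h5 e5⟩⟩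
  · exact ⟨7, by norm_num, by norm_num,
      by simp only [SS, Set.mem_Iio]; exact lt_of_le_of_ne h6 e6⟩

lemma mem_Vcover {z : ℝ} (hz : 1 + s2 < z) (hE : z ∉ E2) :
    ∃ i, 1 ≤ i ∧ i ≤ 7 ∧ z ∈ VV i := by
  have hq1 := q1; have hq3 := q3
  simp only [E2, Set.mem_insert_iff, Set.mem_singleton_iff, not_or] at hE
  obtain ⟨e1, e2, e3, e4, e5, e6⟩ := hE
  rcases lt_or_ge (3 + 3*s2) z with h|h
  · exact ⟨7, by norm_num, by norm_num, by simp only [VV, Set.mem_Ioi]; exact h⟩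
  rcases lt_or_ge (3 + 2*s2) z with h2|h2
  · exact ⟨2, by norm_num, by norm_num,
      by simp only [VV, Set.mem_Ioo]; exact ⟨h2, lt_of_le_of_ne h e6⟩⟩
  rcases lt_or_ge (1 + 3*s2) z with h3|h3
  · exact ⟨5, by norm_num, by norm_num,
      by simp only [VV, Set.mem_Ioo]; exact ⟨h3, lt_of_le_of_ne h2 e5⟩⟩
  rcases lt_or_ge (2 + 2*s2) z with h4|h4
  · exact ⟨4, by norm_num, by norm_num,
      by simp only [VV, Set.mem_Ioo]; exact ⟨h4, lt_of_le_of_ne h3 e4⟩⟩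
  rcases lt_or_ge (3 + s2) z with h5|h5
  · exact ⟨3, by norm_num, by norm_num,
      by simp only [VV, Set.mem_Ioo]; exact ⟨h5, lt_of_le_of_ne h4 e3⟩⟩
  rcases lt_or_ge (1 + 2*s2) z with h6|h6
  · exact ⟨6, by norm_num, by norm_num,
      by simp only [VV, Set.mem_Ioo]; exact ⟨h6, lt_of_le_of_ne h5 e2⟩⟩
  · exact ⟨1, le_refl _, by norm_num,
      by simp only [VV, Set.mem_Ioo]; exact ⟨hz, lt_of_le_of_ne h6 e1⟩⟩

lemma V_disj {i j : ℕ} (hi1 : 1 ≤ i) (hi7 : i ≤ 7) (hj1 : 1 ≤ j) (hj7 : j ≤ 7)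
    {z : ℝ} (hzi : z ∈ VV i) (hzj : z ∈ VV j) : i = j := by
  have hq1 := q1; have hq3 := q3
  interval_cases i <;> interval_cases j <;>
    simp only [VV, Set.mem_Ioo, Set.mem_Ioi] at hzi hzj <;>
    first
      | rfl
      | (exfalso
         try obtain ⟨hzi1, hzi2⟩ := hzi
         try obtain ⟨hzj1, hzj2⟩ := hzj
         linarith)

lemma Fhat_eq {i : ℕ} (h1 : 1 ≤ i) (hB : BranchOK i) {u v : ℝ} (hu : u ∈ SS i) :
    Fhat (u, v) = (ff i u, ff i v) := by
  have hsec : sectorIndex u = i := hB.sec u hu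
  simp only [Fhat]
  rw [show sectorIndex (u, v).1 = i from hsec, if_neg (by omega : ¬ i = 0)]
  simp only [hB.mobf]

lemma E1_sub : E1 ⊆ Set.Iio (1 + Real.sqrt 2) := by
  have hq1 := q1
  intro x hx
  simp only [E1, Set.mem_insert_iff, Set.mem_singleton_iff] at hx
  simp only [Set.mem_Iio]
  rcases hx with h|h|h|h|h|h <;> subst h <;> linarith

lemma E2_sub : E2 ⊆ Set.Ioi (1 + Real.sqrt 2) := by
  have hq1 := q1
  intro x hx
  simp only [E2, Set.mem_insert_iff, Set.mem_singleton_iff] at hx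
  simp only [Set.mem_Ioi]
  rcases hx with h|h|h|h|h|h <;> subst h <;> linarith

/-- Up to null sets, the natural extension `F̂` of the octagon Farey map is a bijection
of `Σ × Σ₀ = (-∞, 1+√2) × (1+√2, ∞)` onto itself. -/
theorem Fhat_bijective_mod_null :
    ∃ N₁ N₂ : Set (ℝ × ℝ),
      N₁ ⊆ Set.Iio (1 + Real.sqrt 2) ×ˢ Set.Ioi (1 + Real.sqrt 2) ∧
      N₂ ⊆ Set.Iio (1 + Real.sqrt 2) ×ˢ Set.Ioi (1 + Real.sqrt 2) ∧
      volume N₁ = 0 ∧ volume N₂ = 0 ∧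
      Set.BijOn Fhat
        ((Set.Iio (1 + Real.sqrt 2) ×ˢ Set.Ioi (1 + Real.sqrt 2)) \ N₁)
        ((Set.Iio (1 + Real.sqrt 2) ×ˢ Set.Ioi (1 + Real.sqrt 2)) \ N₂) := by
  refine ⟨E1 ×ˢ Set.Ioi (1 + Real.sqrt 2), Set.Iio (1 + Real.sqrt 2) ×ˢ E2,
    Set.prod_mono E1_sub (subset_refl _), Set.prod_mono (subset_refl _) E2_sub, ?_, ?_, ?_, ?_, ?_⟩
  · have hfin : E1.Finite := by
      simp only [E1]
      exact (((((Set.finite_singleton _).insert _).insert _).insert _).insert _).insert _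
    have h0 : volume E1 = 0 := Set.Finite.measure_zero hfin _
    rw [Measure.volume_eq_prod, Measure.prod_prod, h0, zero_mul]
  · have hfin : E2.Finite := by
      simp only [E2]
      exact (((((Set.finite_singleton _).insert _).insert _).insert _).insert _).insert _
    have h0 : volume E2 = 0 := Set.Finite.measure_zero hfin _
    rw [Measure.volume_eq_prod, Measure.prod_prod, h0, mul_zero]
  · -- MapsTo
    intro p hp
    simp only [Set.mem_diff, Set.mem_prod, Set.mem_Iio, Set.mem_Ioi] at hp
    obtain ⟨⟨hpu, hpv⟩, hnot⟩ := hp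
    have hE : p.1 ∉ E1 := fun h => hnot ⟨h, hpv⟩
    obtain ⟨i, hi1, hi7, hSi⟩ := mem_branch hpu hE
    have hB := branch_ok i hi1 hi7
    have key : Fhat p = (ff i p.1, ff i p.2) := Fhat_eq hi1 hB hSi
    have hV := hB.fV p.2 hpv
    have hVs := hB.Vsub _ hV
    rw [key]
    simp only [Set.mem_diff, Set.mem_prod, Set.mem_Iio, Set.mem_Ioi]
    exact ⟨⟨hB.fS _ hSi, hVs.1⟩, fun h => hVs.2 h.2⟩
  · -- InjOn
    intro p hp q hq heq
    simp only [Set.mem_diff, Set.mem_prod, Set.mem_Iio, Set.mem_Ioi] at hp hq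
    obtain ⟨⟨hpu, hpv⟩, hnotp⟩ := hp
    obtain ⟨⟨hqu, hqv⟩, hnotq⟩ := hq
    obtain ⟨i, hi1, hi7, hSi⟩ := mem_branch hpu (fun h => hnotp ⟨h, hpv⟩)
    obtain ⟨j, hj1, hj7, hSj⟩ := mem_branch hqu (fun h => hnotq ⟨h, hqv⟩)
    have hBi := branch_ok i hi1 hi7
    have hBj := branch_ok j hj1 hj7
    have keyp : Fhat p = (ff i p.1, ff i p.2) := Fhat_eq hi1 hBi hSi
    have keyq : Fhat q = (ff j q.1, ff j q.2) := Fhat_eq hj1 hBj hSj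
    rw [keyp, keyq, Prod.mk.injEq] at heq
    have hij : i = j := by
      refine V_disj hi1 hi7 hj1 hj7 (hBi.fV p.2 hpv) ?_
      rw [heq.2]
      exact hBj.fV q.2 hqv
    subst hij
    have h1 : p.1 = q.1 := by
      rw [← hBi.gf p.1 (Or.inl hSi), ← hBi.gf q.1 (Or.inl hSj), heq.1]
    have h2 : p.2 = q.2 := by
      rw [← hBi.gf p.2 (Or.inr hpv), ← hBi.gf q.2 (Or.inr hqv), heq.2]
    exact Prod.ext h1 h2
  · -- SurjOn
    intro q hq
    simp only [Set.mem_diff, Set.mem_prod, Set.mem_Iio, Set.mem_Ioi] at hq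
    obtain ⟨⟨hqu, hqv⟩, hnot⟩ := hq
    have hE : q.2 ∉ E2 := fun h => hnot ⟨hqu, h⟩
    obtain ⟨i, hi1, hi7, hVi⟩ := mem_Vcover hqv hE
    have hB := branch_ok i hi1 hi7
    have hgS : gg i q.1 ∈ SS i := hB.gS _ hqu
    have hSs := hB.Ssub _ hgS
    refine ⟨(gg i q.1, gg i q.2), ?_, ?_⟩
    · simp only [Set.mem_diff, Set.mem_prod, Set.mem_Iio, Set.mem_Ioi]
      exact ⟨⟨hSs.1, hB.gV _ hVi⟩, fun h => hSs.2 h.1⟩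
    · rw [Fhat_eq hi1 hB hgS, hB.fg q.1 (Or.inl hqu), hB.fg q.2 (Or.inr hVi)]
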